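/- Let p, q be probability distributions on [n], m₁, m₂ > 0, and for i ∈ A ⊆ [n] let X_i ~ Poisson(m₁p_i), Y_i ~ Poisson(m₂q_i) be independent. Define Z_A = Σ_{i∈A} ((m₂X_i - m₁Y_i)² - (m₂²X_i + m₁²Y_i))/(X_i + Y_i) (terms with X_i + Y_i = 0 taken as 0). Then E[Z_A] ≥ m₁²m₂² (Σ_{i∈A} |p_i - q_i|)² / (4n + m₁ + m₂). -/

import Mathlib

open scoped BigOperators
open Real

/-- Poisson pmf with rate `lam` at `k`. -/
noncomputable def pp (lam : ℝ) (k : ℕ) : ℝ := Real.exp (-lam) * lam ^ k / (Nat.factorial k)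


lemma pp_nonneg {a : ℝ} (ha : 0 ≤ a) (k : ℕ) : 0 ≤ pp a k := by
  unfold pp; positivity

lemma summable_pp (a : ℝ) : Summable (pp a) := by
  unfold pp
  simpa [mul_div_assoc] using (Real.summable_pow_div_factorial a).mul_left (Real.exp (-a))

lemma tsum_pp (a : ℝ) : ∑' k, pp a k = 1 := by
  unfold pp
  have h : (fun k : ℕ => Real.exp (-a) * a ^ k / (Nat.factorial k)) =
      fun k : ℕ => Real.exp (-a) * (a ^ k / (Nat.factorial k)) := by
    funext k; ring
  rw [h, tsum_mul_left]
  have h2 : ∑' k : ℕ, a ^ k / (Nat.factorial k : ℝ) = Real.exp a := by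
    rw [Real.exp_eq_exp_ℝ, NormedSpace.exp_eq_tsum_div]
  rw [h2, ← Real.exp_add]; simp

lemma pp_shift1 (a : ℝ) (k : ℕ) : pp a (k+1) * ((k : ℝ) + 1) = a * pp a k := by
  unfold pp
  rw [Nat.factorial_succ]
  have hk : (Nat.factorial k : ℝ) ≠ 0 := by positivity
  push_cast
  field_simp
  ring

lemma pp_shift2 (a : ℝ) (k : ℕ) : pp a (k+2) * (((k : ℝ) + 2) * ((k : ℝ) + 1)) = a^2 * pp a k := by
  have h1 := pp_shift1 a (k+1)
  have h2 := pp_shift1 a k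
  push_cast at h1
  calc pp a (k+2) * (((k:ℝ) + 2) * ((k:ℝ) + 1))
      = (pp a (k+1+1) * ((k:ℝ) + 1 + 1)) * ((k:ℝ)+1) := by ring_nf
    _ = (a * pp a (k+1)) * ((k:ℝ)+1) := by rw [h1]
    _ = a * (pp a (k+1) * ((k:ℝ)+1)) := by ring
    _ = a^2 * pp a k := by rw [h2]; ring

lemma summable_mul_pp {a : ℝ} (ha : 0 ≤ a) : Summable (fun k : ℕ => (k : ℝ) * pp a k) := by
  rw [← summable_nat_add_iff 1]
  apply Summable.congr ((summable_pp a).mul_left a)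
  intro n
  push_cast
  rw [← pp_shift1 a n]; ring

lemma tsum_mul_pp {a : ℝ} (ha : 0 ≤ a) : ∑' k : ℕ, (k : ℝ) * pp a k = a := by
  rw [Summable.tsum_eq_zero_add (summable_mul_pp ha)]
  have h : (fun n : ℕ => ((n : ℝ) + 1) * pp a (n+1)) = fun n : ℕ => a * pp a n := by
    funext n; rw [← pp_shift1 a n]; ring
  push_cast
  rw [h, tsum_mul_left, tsum_pp]
  simp


section Prod
variable {a b : ℝ}

lemma summable_P (ha : 0 ≤ a) (hb : 0 ≤ b) : Summable (fun x : ℕ × ℕ => pp a x.1 * pp b x.2) :=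
  (summable_pp a).mul_of_nonneg (summable_pp b) (fun k => pp_nonneg ha k) (fun l => pp_nonneg hb l)

lemma tsum_P (ha : 0 ≤ a) (hb : 0 ≤ b) : ∑' x : ℕ × ℕ, pp a x.1 * pp b x.2 = 1 := by
  rw [Summable.tsum_prod (summable_P ha hb)]
  simp only [tsum_mul_left, tsum_pp b, mul_one, tsum_pp a]

lemma summable_P1 (ha : 0 ≤ a) (hb : 0 ≤ b) : Summable (fun x : ℕ × ℕ => pp a x.1 * pp b x.2 * x.1) := by
  apply Summable.congr ((summable_mul_pp ha).mul_of_nonneg (summable_pp b)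
    (fun k => mul_nonneg (Nat.cast_nonneg k) (pp_nonneg ha k)) (fun l => pp_nonneg hb l))
  intro x; ring

lemma tsum_P1 (ha : 0 ≤ a) (hb : 0 ≤ b) : ∑' x : ℕ × ℕ, pp a x.1 * pp b x.2 * x.1 = a := by
  rw [Summable.tsum_prod (summable_P1 ha hb)]
  have h : ∀ k : ℕ, (∑' l : ℕ, pp a k * pp b l * k) = (k : ℝ) * pp a k := by
    intro k
    have : (fun l : ℕ => pp a k * pp b l * k) = fun l : ℕ => ((k : ℝ) * pp a k) * pp b l := by
      funext l; ring
    rw [this, tsum_mul_left, tsum_pp b, mul_one]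
  simp only [h]
  exact tsum_mul_pp ha

lemma summable_P2 (ha : 0 ≤ a) (hb : 0 ≤ b) : Summable (fun x : ℕ × ℕ => pp a x.1 * pp b x.2 * x.2) := by
  apply Summable.congr ((summable_pp a).mul_of_nonneg (summable_mul_pp hb)
    (fun k => pp_nonneg ha k) (fun l => mul_nonneg (Nat.cast_nonneg l) (pp_nonneg hb l)))
  intro x; ring

lemma tsum_P2 (ha : 0 ≤ a) (hb : 0 ≤ b) : ∑' x : ℕ × ℕ, pp a x.1 * pp b x.2 * x.2 = b := by
  rw [Summable.tsum_prod (summable_P2 ha hb)]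
  have h : ∀ k : ℕ, (∑' l : ℕ, pp a k * pp b l * l) = pp a k * b := by
    intro k
    have : (fun l : ℕ => pp a k * pp b l * l) = fun l : ℕ => pp a k * ((l : ℝ) * pp b l) := by
      funext l; ring
    rw [this, tsum_mul_left, tsum_mul_pp hb]
  simp only [h, tsum_mul_right, tsum_pp a, one_mul]

lemma summable_G (ha : 0 ≤ a) (hb : 0 ≤ b) : Summable (fun x : ℕ × ℕ => pp a x.1 * pp b x.2 / ((x.1 : ℝ) + x.2 + 2)) := by
  apply Summable.of_nonneg_of_le (fun x => div_nonneg (mul_nonneg (pp_nonneg ha _) (pp_nonneg hb _)) (by positivity)) _ (summable_P ha hb)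
  intro x
  apply div_le_self (mul_nonneg (pp_nonneg ha _) (pp_nonneg hb _))
  have : (0:ℝ) ≤ (x.1 : ℝ) + x.2 := by positivity
  linarith

lemma tsum_G_ge (ha : 0 ≤ a) (hb : 0 ≤ b) : 1 / (a + b + 2) ≤ ∑' x : ℕ × ℕ, pp a x.1 * pp b x.2 / ((x.1 : ℝ) + x.2 + 2) := by
  set z := a + b with hz
  have hz0 : 0 ≤ z := by rw [hz]; linarith
  have hz2 : (0:ℝ) < z + 2 := by linarith
  -- tangent family
  have htan : ∀ x : ℕ × ℕ,
      pp a x.1 * pp b x.2 * ((2*z + 2 - ((x.1:ℝ) + x.2)) / (z+2)^2)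
        ≤ pp a x.1 * pp b x.2 / ((x.1 : ℝ) + x.2 + 2) := by
    intro x
    have hs : (0:ℝ) ≤ (x.1 : ℝ) + x.2 := by positivity
    have key : (2*z + 2 - ((x.1:ℝ) + x.2)) / (z+2)^2 ≤ 1 / ((x.1:ℝ) + x.2 + 2) := by
      rw [div_le_div_iff₀ (by positivity) (by linarith)]
      nlinarith [sq_nonneg (((x.1:ℝ) + x.2) - z)]
    calc pp a x.1 * pp b x.2 * ((2*z + 2 - ((x.1:ℝ) + x.2)) / (z+2)^2)
        ≤ pp a x.1 * pp b x.2 * (1 / ((x.1:ℝ) + x.2 + 2)) :=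
          mul_le_mul_of_nonneg_left key (mul_nonneg (pp_nonneg ha _) (pp_nonneg hb _))
      _ = pp a x.1 * pp b x.2 / ((x.1 : ℝ) + x.2 + 2) := by ring
  have hrw : (fun x : ℕ × ℕ => pp a x.1 * pp b x.2 * ((2*z + 2 - ((x.1:ℝ) + x.2)) / (z+2)^2))
      = fun x : ℕ × ℕ => ((2*z+2)/(z+2)^2) * (pp a x.1 * pp b x.2)
        - (1/(z+2)^2) * (pp a x.1 * pp b x.2 * x.1) - (1/(z+2)^2) * (pp a x.1 * pp b x.2 * x.2) := by
    funext x; field_simp; ring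
  have hsumtan : Summable (fun x : ℕ × ℕ =>
      pp a x.1 * pp b x.2 * ((2*z + 2 - ((x.1:ℝ) + x.2)) / (z+2)^2)) := by
    rw [hrw]
    exact (((summable_P ha hb).mul_left _).sub ((summable_P1 ha hb).mul_left _)).sub
      ((summable_P2 ha hb).mul_left _)
  have htsum : ∑' x : ℕ × ℕ, pp a x.1 * pp b x.2 * ((2*z + 2 - ((x.1:ℝ) + x.2)) / (z+2)^2)
      = 1 / (z + 2) := by
    rw [hrw, Summable.tsum_sub (((summable_P ha hb).mul_left _).sub ((summable_P1 ha hb).mul_left _))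
      ((summable_P2 ha hb).mul_left _),
      Summable.tsum_sub ((summable_P ha hb).mul_left _) ((summable_P1 ha hb).mul_left _),
      tsum_mul_left, tsum_mul_left, tsum_mul_left, tsum_P ha hb, tsum_P1 ha hb, tsum_P2 ha hb]
    field_simp
    ring
  rw [← htsum]
  exact Summable.tsum_le_tsum htan hsumtan (summable_G ha hb)

end Prod


open Function in
lemma key (m₁ m₂ : ℝ) {a b : ℝ} (ha : 0 ≤ a) (hb : 0 ≤ b) :
    (∑' k : ℕ, ∑' l : ℕ, pp a k * pp b l *
        (if k + l = 0 then 0 else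
          ((m₂ * k - m₁ * l) ^ 2 - (m₂ ^ 2 * k + m₁ ^ 2 * l)) / ((k : ℝ) + l)))
      ≥ (m₂ * a - m₁ * b) ^ 2 / (a + b + 2) := by
  set G : ℕ × ℕ → ℝ := fun x => pp a x.1 * pp b x.2 / ((x.1 : ℝ) + x.2 + 2) with hGdef
  set D : ℝ := ∑' x : ℕ × ℕ, G x with hDdef
  set F : ℕ × ℕ → ℝ := fun x => pp a x.1 * pp b x.2 *
      (((m₂ * x.1 - m₁ * x.2) ^ 2 - (m₂ ^ 2 * x.1 + m₁ ^ 2 * x.2)) / ((x.1 : ℝ) + x.2)) with hFdef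
  set F1 : ℕ × ℕ → ℝ := fun x => pp a x.1 * pp b x.2 * ((x.1 : ℝ) * ((x.1:ℝ) - 1) / ((x.1:ℝ) + x.2)) with hF1
  set F2 : ℕ × ℕ → ℝ := fun x => pp a x.1 * pp b x.2 * ((x.2 : ℝ) * ((x.2:ℝ) - 1) / ((x.1:ℝ) + x.2)) with hF2
  set F3 : ℕ × ℕ → ℝ := fun x => pp a x.1 * pp b x.2 * ((x.1 : ℝ) * (x.2:ℝ) / ((x.1:ℝ) + x.2)) with hF3
  have hGsum : Summable G := summable_G ha hb
  -- injections
  have hi1 : Injective (fun y : ℕ × ℕ => (y.1 + 2, y.2)) := by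
    intro y1 y2 h; simp only [Prod.mk.injEq] at h; exact Prod.ext (by omega) h.2
  have hi2 : Injective (fun y : ℕ × ℕ => (y.1, y.2 + 2)) := by
    intro y1 y2 h; simp only [Prod.mk.injEq] at h; exact Prod.ext h.1 (by omega)
  have hi3 : Injective (fun y : ℕ × ℕ => (y.1 + 1, y.2 + 1)) := by
    intro y1 y2 h; simp only [Prod.mk.injEq] at h; exact Prod.ext (by omega) (by omega)
  -- compositions
  have hc1 : ∀ y : ℕ × ℕ, F1 (y.1 + 2, y.2) = a ^ 2 * G y := by
    intro y
    simp only [hF1, hGdef]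
    push_cast
    have h2 := pp_shift2 a y.1
    have hrw : pp a (y.1 + 2) * pp b y.2 * (((y.1:ℝ) + 2) * ((y.1:ℝ) + 2 - 1) / ((y.1:ℝ) + 2 + y.2))
        = (pp a (y.1+2) * (((y.1:ℝ) + 2) * ((y.1:ℝ) + 1))) * pp b y.2 / ((y.1:ℝ) + y.2 + 2) := by
      ring_nf
    rw [hrw, h2]; ring
  have hc2 : ∀ y : ℕ × ℕ, F2 (y.1, y.2 + 2) = b ^ 2 * G y := by
    intro y
    simp only [hF2, hGdef]
    push_cast
    have h2 := pp_shift2 b y.2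
    have hrw : pp a y.1 * pp b (y.2 + 2) * (((y.2:ℝ) + 2) * ((y.2:ℝ) + 2 - 1) / ((y.1:ℝ) + ((y.2:ℝ) + 2)))
        = (pp b (y.2+2) * (((y.2:ℝ) + 2) * ((y.2:ℝ) + 1))) * pp a y.1 / ((y.1:ℝ) + y.2 + 2) := by
      ring_nf
    rw [hrw, h2]; ring
  have hc3 : ∀ y : ℕ × ℕ, F3 (y.1 + 1, y.2 + 1) = (a * b) * G y := by
    intro y
    simp only [hF3, hGdef]
    push_cast
    have h1 := pp_shift1 a y.1
    have h2 := pp_shift1 b y.2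
    have hrw : pp a (y.1 + 1) * pp b (y.2 + 1) * (((y.1:ℝ) + 1) * ((y.2:ℝ) + 1) / (((y.1:ℝ) + 1) + ((y.2:ℝ) + 1)))
        = (pp a (y.1+1) * ((y.1:ℝ) + 1)) * (pp b (y.2+1) * ((y.2:ℝ) + 1)) / ((y.1:ℝ) + y.2 + 2) := by
      ring_nf
    rw [hrw, h1, h2]; ring
  -- vanishing off ranges
  have hv1 : ∀ x : ℕ × ℕ, x ∉ Set.range (fun y : ℕ × ℕ => (y.1 + 2, y.2)) → F1 x = 0 := by
    intro x hx
    have hx1 : x.1 < 2 := by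
      by_contra h
      push_neg at h
      exact hx ⟨(x.1 - 2, x.2), Prod.ext (by simp; omega) rfl⟩
    interval_cases h : x.1 <;> simp [hF1, h] <;> norm_num
  have hv2 : ∀ x : ℕ × ℕ, x ∉ Set.range (fun y : ℕ × ℕ => (y.1, y.2 + 2)) → F2 x = 0 := by
    intro x hx
    have hx2 : x.2 < 2 := by
      by_contra h
      push_neg at h
      exact hx ⟨(x.1, x.2 - 2), Prod.ext rfl (by simp; omega)⟩
    interval_cases h : x.2 <;> simp [hF2, h] <;> norm_num
  have hv3 : ∀ x : ℕ × ℕ, x ∉ Set.range (fun y : ℕ × ℕ => (y.1 + 1, y.2 + 1)) → F3 x = 0 := by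
    intro x hx
    have hx1 : x.1 = 0 ∨ x.2 = 0 := by
      by_contra h
      push_neg at h
      exact hx ⟨(x.1 - 1, x.2 - 1), Prod.ext (by simp; omega) (by simp; omega)⟩
    rcases hx1 with h | h <;> simp [hF3, h]
  -- summability and tsums of F1 F2 F3
  have hs1 : Summable F1 := by
    rw [← hi1.summable_iff hv1]
    exact Summable.congr (hGsum.mul_left (a^2)) (fun y => (hc1 y).symm)
  have ht1 : ∑' x, F1 x = a ^ 2 * D := by
    rw [← hi1.tsum_eq (Function.support_subset_iff'.2 hv1)]
    calc ∑' y : ℕ × ℕ, F1 (y.1 + 2, y.2) = ∑' y : ℕ × ℕ, a ^ 2 * G y := tsum_congr hc1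
      _ = a ^ 2 * D := by rw [tsum_mul_left]
  have hs2 : Summable F2 := by
    rw [← hi2.summable_iff hv2]
    exact Summable.congr (hGsum.mul_left (b^2)) (fun y => (hc2 y).symm)
  have ht2 : ∑' x, F2 x = b ^ 2 * D := by
    rw [← hi2.tsum_eq (Function.support_subset_iff'.2 hv2)]
    calc ∑' y : ℕ × ℕ, F2 (y.1, y.2 + 2) = ∑' y : ℕ × ℕ, b ^ 2 * G y := tsum_congr hc2
      _ = b ^ 2 * D := by rw [tsum_mul_left]
  have hs3 : Summable F3 := by
    rw [← hi3.summable_iff hv3]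
    exact Summable.congr (hGsum.mul_left (a*b)) (fun y => (hc3 y).symm)
  have ht3 : ∑' x, F3 x = (a * b) * D := by
    rw [← hi3.tsum_eq (Function.support_subset_iff'.2 hv3)]
    calc ∑' y : ℕ × ℕ, F3 (y.1 + 1, y.2 + 1) = ∑' y : ℕ × ℕ, (a * b) * G y := tsum_congr hc3
      _ = (a * b) * D := by rw [tsum_mul_left]
  -- split F
  have hsplit : F = fun x => m₂^2 * F1 x + m₁^2 * F2 x - 2*m₁*m₂ * F3 x := by
    funext x
    simp only [hFdef, hF1, hF2, hF3]
    have hnum : ((m₂ * x.1 - m₁ * x.2) ^ 2 - (m₂ ^ 2 * x.1 + m₁ ^ 2 * x.2))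
        = m₂^2 * ((x.1:ℝ) * ((x.1:ℝ) - 1)) + m₁^2 * ((x.2:ℝ) * ((x.2:ℝ) - 1))
          - 2*m₁*m₂ * ((x.1:ℝ) * (x.2:ℝ)) := by ring
    rw [hnum, sub_div, add_div, mul_div_assoc, mul_div_assoc, mul_div_assoc]
    ring
  have hsF : Summable F := by
    rw [hsplit]
    exact ((hs1.mul_left _).add (hs2.mul_left _)).sub (hs3.mul_left _)
  have htF : ∑' x, F x = (m₂ * a - m₁ * b) ^ 2 * D := by
    rw [hsplit, Summable.tsum_sub ((hs1.mul_left _).add (hs2.mul_left _)) (hs3.mul_left _),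
      Summable.tsum_add (hs1.mul_left _) (hs2.mul_left _), tsum_mul_left, tsum_mul_left, tsum_mul_left,
      ht1, ht2, ht3]
    ring
  -- original expression equals tsum of F
  have horig : ∀ k l : ℕ, pp a k * pp b l *
      (if k + l = 0 then 0 else
        ((m₂ * k - m₁ * l) ^ 2 - (m₂ ^ 2 * k + m₁ ^ 2 * l)) / ((k : ℝ) + l)) = F (k, l) := by
    intro k l
    by_cases h : k + l = 0
    · obtain ⟨hk, hl⟩ : k = 0 ∧ l = 0 := by omega
      subst hk; subst hl
      simp [hFdef]
    · simp [hFdef, h]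
      intro hk hl
      exact absurd (by omega : k + l = 0) h
  have hLHS : (∑' k : ℕ, ∑' l : ℕ, pp a k * pp b l *
      (if k + l = 0 then 0 else
        ((m₂ * k - m₁ * l) ^ 2 - (m₂ ^ 2 * k + m₁ ^ 2 * l)) / ((k : ℝ) + l))) = ∑' x, F x := by
    rw [Summable.tsum_prod hsF]
    exact tsum_congr fun k => tsum_congr fun l => horig k l
  rw [hLHS, htF, ge_iff_le]
  have hzd : (0:ℝ) < a + b + 2 := by linarith
  have := tsum_G_ge ha hb
  calc (m₂ * a - m₁ * b) ^ 2 / (a + b + 2)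
      = (m₂ * a - m₁ * b) ^ 2 * (1 / (a + b + 2)) := by ring
    _ ≤ (m₂ * a - m₁ * b) ^ 2 * D :=
        mul_le_mul_of_nonneg_left (by rw [hDdef]; exact this) (sq_nonneg _)


theorem stmt_8 (n : ℕ) (p q : Fin n → ℝ) (m₁ m₂ : ℝ) (hm₁ : 0 < m₁) (hm₂ : 0 < m₂)
    (hp0 : ∀ i, 0 ≤ p i) (hq0 : ∀ i, 0 ≤ q i)
    (hp1 : ∑ i, p i = 1) (hq1 : ∑ i, q i = 1) (A : Finset (Fin n)) :
    (∑ i ∈ A, ∑' k : ℕ, ∑' l : ℕ, pp (m₁ * p i) k * pp (m₂ * q i) l *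
        (if k + l = 0 then 0 else
          ((m₂ * k - m₁ * l) ^ 2 - (m₂ ^ 2 * k + m₁ ^ 2 * l)) / ((k : ℝ) + l))) ≥
      m₁ ^ 2 * m₂ ^ 2 * (∑ i ∈ A, |p i - q i|) ^ 2 / (4 * n + m₁ + m₂) := by
  set c : Fin n → ℝ := fun i => m₁ * m₂ * |p i - q i| with hc
  set z : Fin n → ℝ := fun i => m₁ * p i + m₂ * q i with hzdef
  have hz0 : ∀ i, 0 ≤ z i := fun i =>
    add_nonneg (mul_nonneg hm₁.le (hp0 i)) (mul_nonneg hm₂.le (hq0 i))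
  have hstep1 : ∀ i ∈ A, c i ^ 2 / (z i + 2) ≤
      ∑' k : ℕ, ∑' l : ℕ, pp (m₁ * p i) k * pp (m₂ * q i) l *
        (if k + l = 0 then 0 else
          ((m₂ * k - m₁ * l) ^ 2 - (m₂ ^ 2 * k + m₁ ^ 2 * l)) / ((k : ℝ) + l)) := by
    intro i _
    have h := key m₁ m₂ (mul_nonneg hm₁.le (hp0 i)) (mul_nonneg hm₂.le (hq0 i))
    have hcc : c i ^ 2 = (m₂ * (m₁ * p i) - m₁ * (m₂ * q i)) ^ 2 := by
      simp only [hc]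
      rw [mul_pow, sq_abs]; ring
    rw [hcc]
    exact h
  have hA : (∑ i ∈ A, c i ^ 2 / (z i + 2)) ≤
      ∑ i ∈ A, ∑' k : ℕ, ∑' l : ℕ, pp (m₁ * p i) k * pp (m₂ * q i) l *
        (if k + l = 0 then 0 else
          ((m₂ * k - m₁ * l) ^ 2 - (m₂ ^ 2 * k + m₁ ^ 2 * l)) / ((k : ℝ) + l)) :=
    Finset.sum_le_sum hstep1
  have hCS : (∑ i ∈ A, c i) ^ 2 / (∑ i ∈ A, (z i + 2)) ≤ ∑ i ∈ A, c i ^ 2 / (z i + 2) :=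
    Finset.sq_sum_div_le_sum_sq_div A c (fun i _ => by have := hz0 i; linarith)
  have hden : (∑ i ∈ A, (z i + 2)) ≤ 4 * n + m₁ + m₂ := by
    have h1 : (∑ i ∈ A, z i) ≤ m₁ + m₂ := by
      have hp : (∑ i ∈ A, p i) ≤ 1 := by
        rw [← hp1]
        exact Finset.sum_le_sum_of_subset_of_nonneg (Finset.subset_univ A)
          (fun i _ _ => hp0 i)
      have hq : (∑ i ∈ A, q i) ≤ 1 := by
        rw [← hq1]
        exact Finset.sum_le_sum_of_subset_of_nonneg (Finset.subset_univ A)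
          (fun i _ _ => hq0 i)
      simp only [hzdef]
      rw [Finset.sum_add_distrib, ← Finset.mul_sum, ← Finset.mul_sum]
      nlinarith
    have h2 : (A.card : ℝ) ≤ n := by
      have := Finset.card_le_univ A
      simp only [Finset.card_univ, Fintype.card_fin] at this
      exact_mod_cast this
    rw [Finset.sum_add_distrib, Finset.sum_const, nsmul_eq_mul]
    linarith
  have hnum : m₁ ^ 2 * m₂ ^ 2 * (∑ i ∈ A, |p i - q i|) ^ 2 = (∑ i ∈ A, c i) ^ 2 := by
    simp only [hc]
    rw [← Finset.mul_sum, mul_pow]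
    ring
  rw [ge_iff_le, hnum]
  rcases A.eq_empty_or_nonempty with hAe | hAne
  · subst hAe
    simp only [Finset.sum_empty, le_refl, zero_pow, zero_div, ne_eq, OfNat.ofNat_ne_zero,
      not_false_eq_true]
  · have hdpos : (0:ℝ) < ∑ i ∈ A, (z i + 2) := by
      apply Finset.sum_pos (fun i _ => by have := hz0 i; linarith) hAne
    have hd2 : (0:ℝ) < 4 * n + m₁ + m₂ := by positivity
    calc (∑ i ∈ A, c i) ^ 2 / (4 * n + m₁ + m₂)
        ≤ (∑ i ∈ A, c i) ^ 2 / (∑ i ∈ A, (z i + 2)) :=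
          div_le_div_of_nonneg_left (sq_nonneg _) hdpos hden
      _ ≤ ∑ i ∈ A, c i ^ 2 / (z i + 2) := hCS
      _ ≤ _ := hA
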